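/- (Lemma 2.3) Let f ∈ L²_t H¹_x(Q_1; ℝ³) with curl f(·,t) ∈ L²(B_1) for a.e. t, and suppose sup_{0<r<1} E(f;r) ≤ M for some M > 0, where E(f;r) = (1/r)∬_{Q_r}|∇f|². Then there exist absolute constants c > 0 and r₁ ∈ (0,1/2] such that H̃(f;r) ≤ c r H̃(f;1/2) + ĉ(M) for all 0 < r < r₁, where H̃(f;r) = (1/r³)∬_{Q_r}|f−[f]_{B_r}|² and ĉ(M) = c₂ M for an absolute constant c₂ (so ĉ(M) → 0 as M → 0). -/

import Mathlib

open MeasureTheory Metric Set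

noncomputable section
set_option maxHeartbeats 1000000
open scoped ENNReal NNReal

abbrev E3 := EuclideanSpace ℝ (Fin 3)

/-- The curl of a vector field on ℝ³. -/
def curl3 (f : E3 → E3) (x : E3) : Fin 3 → ℝ :=
  ![fderiv ℝ (fun y => f y 2) x (EuclideanSpace.single 1 (1:ℝ))
      - fderiv ℝ (fun y => f y 1) x (EuclideanSpace.single 2 (1:ℝ)),
    fderiv ℝ (fun y => f y 0) x (EuclideanSpace.single 2 (1:ℝ))
      - fderiv ℝ (fun y => f y 2) x (EuclideanSpace.single 0 (1:ℝ)),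
    fderiv ℝ (fun y => f y 1) x (EuclideanSpace.single 0 (1:ℝ))
      - fderiv ℝ (fun y => f y 0) x (EuclideanSpace.single 1 (1:ℝ))]

/-- `H̃(f;r) = (1/r³)∬_{Q_r}|f−[f]_{B_r}|²`. -/
def Htilde (f : ℝ → E3 → E3) (r : ℝ) : ℝ :=
  (1/r^3) * ∫ t in Ioo (-(r^2)) (0:ℝ), ∫ x in ball (0:E3) r,
    ‖f t x - ⨍ y in ball (0:E3) r, f t y‖^2

/-- `E(f;r) = (1/r)∬_{Q_r}|∇f|²`. -/
def Escaled (f : ℝ → E3 → E3) (r : ℝ) : ℝ :=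
  (1/r) * ∫ t in Ioo (-(r^2)) (0:ℝ), ∫ x in ball (0:E3) r, ‖fderiv ℝ (f t) x‖^2

lemma lintegral_comp_affine (G : E3 → ℝ≥0∞) (hG : Measurable G) {a : ℝ} (ha : a ≠ 0) (c : E3) :
    ∫⁻ x, G (a • x + c) = ENNReal.ofReal |(a ^ 3)⁻¹| * ∫⁻ x, G x := by
  have h1 : ∫⁻ z, (fun z => G (z + c)) z ∂(Measure.map (a • ·) volume)
      = ∫⁻ x, G (a • x + c) :=
    lintegral_map (f := fun z => G (z + c))
      (hG.comp (measurable_add_const c)) (measurable_const_smul a)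
  rw [← h1, Measure.map_addHaar_smul volume ha, lintegral_smul_measure]
  have h2 : ∫⁻ z, G (z + c) = ∫⁻ z, G z := lintegral_add_right_eq_self _ c
  rw [h2, finrank_euclideanSpace_fin, smul_eq_mul]

lemma sq_integral_le {α : Type*} [MeasurableSpace α] (μ : Measure α) [IsFiniteMeasure μ]
    {h : α → ℝ} (h1 : Integrable h μ) (h2 : Integrable (fun x => h x ^ 2) μ) :
    (∫ x, h x ∂μ) ^ 2 ≤ (μ univ).toReal * ∫ x, h x ^ 2 ∂μ := by
  set m := (μ univ).toReal with hm
  set I := ∫ x, h x ∂μ with hI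
  set A := ∫ x, h x ^ 2 ∂μ with hA
  have hm0 : 0 ≤ m := ENNReal.toReal_nonneg
  rcases eq_or_lt_of_le hm0 with hm' | hm'
  · have hz : μ = 0 := by
      have := (ENNReal.toReal_eq_zero_iff (μ univ)).mp hm'.symm
      rcases this with h | h
      · exact Measure.measure_univ_eq_zero.mp h
      · exact absurd h (measure_ne_top μ univ)
    simp [hI, hA, hz, ← hm']
  · have key : 0 ≤ ∫ x, (m * h x - I) ^ 2 ∂μ := integral_nonneg fun x => sq_nonneg _
    have ia : Integrable (fun x => m ^ 2 * h x ^ 2 - 2 * m * I * h x) μ :=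
      (h2.const_mul (m ^ 2)).sub (h1.const_mul (2 * m * I))
    have expand : ∫ x, (m * h x - I) ^ 2 ∂μ = m ^ 2 * A - 2 * m * I * I + I ^ 2 * m := by
      have e1 : (fun x => (m * h x - I) ^ 2)
          = fun x => (m ^ 2 * h x ^ 2 - 2 * m * I * h x) + I ^ 2 := by
        ext x; ring
      rw [e1, integral_add ia (integrable_const _),
        integral_sub (h2.const_mul (m ^ 2)) (h1.const_mul (2 * m * I)),
        integral_const_mul, integral_const_mul, integral_const, smul_eq_mul]
      rw [← hI, ← hA, show μ.real univ = m from rfl]; ring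
    rw [expand] at key
    nlinarith [key, hm']

lemma poincare_ball {r : ℝ} (hr0 : 0 < r) (hr1 : r ≤ 1) (g : E3 → E3)
    (hd : ∀ x ∈ ball (0:E3) 1, DifferentiableAt ℝ g x)
    (hint : IntegrableOn g (ball (0:E3) 1))
    (hint2 : IntegrableOn (fun x => ‖g x‖ ^ 2) (ball (0:E3) 1))
    (hder2 : IntegrableOn (fun x => ‖fderiv ℝ g x‖ ^ 2) (ball (0:E3) 1)) :
    ∫ x in ball (0:E3) r, ‖g x - ⨍ y in ball (0:E3) r, g y‖ ^ 2
      ≤ 32 * r ^ 2 * ∫ x in ball (0:E3) r, ‖fderiv ℝ g x‖ ^ 2 := by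
  set B : Set E3 := ball (0:E3) r with hB
  have hBsub : B ⊆ ball (0:E3) 1 := ball_subset_ball hr1
  have hBmeas : MeasurableSet B := measurableSet_ball
  have hvolB_pos : 0 < volume B := measure_ball_pos volume 0 hr0
  have hvolB_lt : volume B < ∞ := measure_ball_lt_top
  set m : ℝ := (volume B).toReal with hm
  have hm0 : 0 < m := ENNReal.toReal_pos (ne_of_gt hvolB_pos) (ne_of_lt hvolB_lt)
  haveI hfinB : IsFiniteMeasure (volume.restrict B) :=
    ⟨by rw [Measure.restrict_apply_univ]; exact hvolB_lt⟩
  have hgB : IntegrableOn g B := hint.mono_set hBsub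
  have hg2B : IntegrableOn (fun x => ‖g x‖ ^ 2) B := hint2.mono_set hBsub
  have hd2B : IntegrableOn (fun x => ‖fderiv ℝ g x‖ ^ 2) B := hder2.mono_set hBsub
  set K2 : ℝ := ∫ x in B, ‖fderiv ℝ g x‖ ^ 2 with hK2
  have hK2nonneg : 0 ≤ K2 := integral_nonneg fun x => sq_nonneg _
  -- the ENNReal-valued gradient-squared density, cut off to B
  set D : E3 → ℝ≥0∞ := fun z => B.indicator (fun z => ENNReal.ofReal (‖fderiv ℝ g z‖ ^ 2)) z
    with hD
  have hDmeas : Measurable D := by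
    apply Measurable.indicator _ hBmeas
    exact ((measurable_fderiv ℝ g).norm.pow_const 2).ennreal_ofReal
  have hKeq : ∫⁻ z, D z = ENNReal.ofReal K2 := by
    rw [hD, lintegral_indicator hBmeas _,
      ← ofReal_integral_eq_lintegral_ofReal hd2B (ae_of_all _ fun x => sq_nonneg _)]
  have hKne : ∫⁻ z, D z ≠ ∞ := by rw [hKeq]; exact ENNReal.ofReal_ne_top
  -- the segment energy
  set Ψ : E3 → E3 → ℝ≥0∞ := fun x y => ∫⁻ s in Icc (0:ℝ) 1, D (y + s • (x - y)) with hΨ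
  -- measurability facts
  have hcont3 : Continuous (fun p : (E3 × E3) × ℝ => p.1.2 + p.2 • (p.1.1 - p.1.2)) :=
    (continuous_snd.comp continuous_fst).add
      (continuous_snd.smul ((continuous_fst.comp continuous_fst).sub
        (continuous_snd.comp continuous_fst)))
  have hmeas_triple : Measurable (fun p : (E3 × E3) × ℝ => D (p.1.2 + p.2 • (p.1.1 - p.1.2))) :=
    hDmeas.comp hcont3.measurable
  have hmeasΨ : Measurable fun p : E3 × E3 => Ψ p.1 p.2 := by
    have h : Measurable fun p : E3 × E3 => ∫⁻ s in Icc (0:ℝ) 1, D (p.2 + s • (p.1 - p.2)) :=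
      hmeas_triple.lintegral_prod_right'
    exact h
  have hmeasΨ1 : ∀ x, Measurable (Ψ x) := by
    intro x
    have h : Measurable fun y : E3 => ∫⁻ s in Icc (0:ℝ) 1, D (y + s • (x - y)) :=
      Measurable.lintegral_prod_right'
        (hDmeas.comp ((continuous_fst.add (continuous_snd.smul
          (continuous_const.sub continuous_fst))).measurable))
    exact h
  -- key change-of-variables bound
  have hcov : ∀ (a : ℝ), 1/2 ≤ a → a ≤ 1 → ∀ c : E3,
      ∫⁻ v in B, D (a • v + c) ≤ ENNReal.ofReal 8 * ∫⁻ z, D z := by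
    intro a ha1 ha2 c
    calc ∫⁻ v in B, D (a • v + c) ≤ ∫⁻ v, D (a • v + c) :=
          setLIntegral_le_lintegral _ _
      _ = ENNReal.ofReal |(a ^ 3)⁻¹| * ∫⁻ z, D z :=
          lintegral_comp_affine D hDmeas (by positivity) c
      _ ≤ ENNReal.ofReal 8 * ∫⁻ z, D z := by
          refine mul_le_mul_left (ENNReal.ofReal_le_ofReal ?_) _
          rw [abs_of_nonneg (by positivity)]
          rw [inv_le_comm₀ (by positivity) (by norm_num)]
          calc (8:ℝ)⁻¹ = (1/2)^3 := by norm_num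
            _ ≤ a ^ 3 := pow_le_pow_left₀ (by norm_num) ha1 3
  -- mass bound
  set Cb : ℝ≥0∞ := volume B * (ENNReal.ofReal 8 * ∫⁻ z, D z) with hCb
  have hGsbound : ∀ s ∈ Icc (0:ℝ) 1,
      (∫⁻ x in B, ∫⁻ y in B, D (y + s • (x - y))) ≤ Cb := by
    intro s hs
    rcases le_or_gt s (1/2) with hhalf | hhalf
    · have inner : ∀ x : E3, ∫⁻ y in B, D (y + s • (x - y))
          ≤ ENNReal.ofReal 8 * ∫⁻ z, D z := by
        intro x
        have heq : ∀ y : E3, y + s • (x - y) = (1 - s) • y + s • x := by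
          intro y; rw [smul_sub, sub_smul, one_smul]; abel
        calc ∫⁻ y in B, D (y + s • (x - y)) = ∫⁻ y in B, D ((1 - s) • y + s • x) := by
              simp_rw [heq]
          _ ≤ _ := hcov (1 - s) (by linarith) (by linarith [hs.1]) (s • x)
      calc ∫⁻ x in B, ∫⁻ y in B, D (y + s • (x - y))
          ≤ ∫⁻ _x in B, (ENNReal.ofReal 8 * ∫⁻ z, D z) := lintegral_mono inner
        _ = Cb := by rw [setLIntegral_const, mul_comm]
    · have hswap : (∫⁻ x in B, ∫⁻ y in B, D (y + s • (x - y)))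
          = ∫⁻ y in B, ∫⁻ x in B, D (y + s • (x - y)) := by
        apply lintegral_lintegral_swap
        exact (hDmeas.comp ((continuous_snd.add
          ((continuous_fst.sub continuous_snd).const_smul s)).measurable)).aemeasurable
      rw [hswap]
      have inner : ∀ y : E3, ∫⁻ x in B, D (y + s • (x - y))
          ≤ ENNReal.ofReal 8 * ∫⁻ z, D z := by
        intro y
        have heq : ∀ x : E3, y + s • (x - y) = s • x + (1 - s) • y := by
          intro x; rw [smul_sub, sub_smul, one_smul]; abel
        calc ∫⁻ x in B, D (y + s • (x - y)) = ∫⁻ x in B, D (s • x + (1 - s) • y) := by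
              simp_rw [heq]
          _ ≤ _ := hcov s (le_of_lt hhalf) hs.2 ((1 - s) • y)
      calc ∫⁻ y in B, ∫⁻ x in B, D (y + s • (x - y))
          ≤ ∫⁻ _y in B, (ENNReal.ofReal 8 * ∫⁻ z, D z) := lintegral_mono inner
        _ = Cb := by rw [setLIntegral_const, mul_comm]
  have hT : (∫⁻ x in B, ∫⁻ y in B, Ψ x y) ≤ Cb := by
    have e1 : ∀ x : E3, ∫⁻ y in B, Ψ x y
        = ∫⁻ s in Icc (0:ℝ) 1, ∫⁻ y in B, D (y + s • (x - y)) := by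
      intro x
      apply lintegral_lintegral_swap
      exact (hDmeas.comp ((continuous_fst.add (continuous_snd.smul
        (continuous_const.sub continuous_fst))).measurable)).aemeasurable
    have e2 : (∫⁻ x in B, ∫⁻ s in Icc (0:ℝ) 1, ∫⁻ y in B, D (y + s • (x - y)))
        = ∫⁻ s in Icc (0:ℝ) 1, ∫⁻ x in B, ∫⁻ y in B, D (y + s • (x - y)) := by
      apply lintegral_lintegral_swap
      apply Measurable.aemeasurable
      apply Measurable.lintegral_prod_right'
        (f := fun (q : (E3 × ℝ) × E3) => D (q.2 + q.1.2 • (q.1.1 - q.2)))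
      exact hDmeas.comp ((continuous_snd.add ((continuous_snd.comp continuous_fst).smul
        ((continuous_fst.comp continuous_fst).sub continuous_snd))).measurable)
    calc (∫⁻ x in B, ∫⁻ y in B, Ψ x y)
        = ∫⁻ x in B, ∫⁻ s in Icc (0:ℝ) 1, ∫⁻ y in B, D (y + s • (x - y)) := by
          exact lintegral_congr fun x => e1 x
      _ = ∫⁻ s in Icc (0:ℝ) 1, ∫⁻ x in B, ∫⁻ y in B, D (y + s • (x - y)) := e2
      _ ≤ ∫⁻ _s in Icc (0:ℝ) 1, Cb := setLIntegral_mono measurable_const hGsbound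
      _ = Cb * volume (Icc (0:ℝ) 1) := setLIntegral_const _ _
      _ = Cb := by simp [Real.volume_Icc]
  have hCb_ne : Cb ≠ ∞ := by
    rw [hCb, hKeq]
    exact ENNReal.mul_ne_top (ne_of_lt hvolB_lt)
      (ENNReal.mul_ne_top ENNReal.ofReal_ne_top ENNReal.ofReal_ne_top)
  haveI hfinIcc : IsFiniteMeasure (volume.restrict (Icc (0:ℝ) 1)) :=
    ⟨by rw [Measure.restrict_apply_univ]; exact measure_Icc_lt_top⟩
  haveI hfinIoc : IsFiniteMeasure (volume.restrict (Ioc (0:ℝ) 1)) :=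
    ⟨by rw [Measure.restrict_apply_univ]; exact measure_Ioc_lt_top⟩
  have hpointwise : ∀ x ∈ B, ∀ y ∈ B, Ψ x y ≠ ∞ →
      ENNReal.ofReal (‖g x - g y‖ ^ 2) ≤ ENNReal.ofReal (4 * r ^ 2) * Ψ x y := by
    intro x hx y hy hfin
    set cc : ℝ → E3 := fun s => y + s • (x - y) with hcdef
    have hcB : ∀ s ∈ Icc (0:ℝ) 1, cc s ∈ B := fun s hs =>
      (convex_ball (0:E3) r).add_smul_sub_mem hy hx hs
    have hc1 : ∀ s ∈ Icc (0:ℝ) 1, cc s ∈ ball (0:E3) 1 := fun s hs => hBsub (hcB s hs)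
    have hccont : Continuous cc := continuous_const.add (continuous_id.smul continuous_const)
    set h : ℝ → ℝ := fun s => ‖fderiv ℝ g (cc s)‖ with hhdef
    have hhmeas : Measurable fun s => h s ^ 2 :=
      (((measurable_fderiv ℝ g).comp hccont.measurable).norm).pow_const 2
    have hΨeq : Ψ x y = ∫⁻ s in Icc (0:ℝ) 1, ENNReal.ofReal (h s ^ 2) := by
      apply setLIntegral_congr_fun measurableSet_Icc
      intro s hs
      rw [hD]
      exact Set.indicator_of_mem (hcB s hs) _
    have hfin2 : (∫⁻ s in Icc (0:ℝ) 1, ENNReal.ofReal (h s ^ 2)) ≠ ∞ := hΨeq ▸ hfin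
    have hh2int : IntegrableOn (fun s => h s ^ 2) (Icc (0:ℝ) 1) := by
      refine ⟨hhmeas.aestronglyMeasurable, ?_⟩
      rw [hasFiniteIntegral_iff_ofReal (ae_of_all _ fun s => sq_nonneg _)]
      exact lt_of_le_of_ne le_top hfin2
    have hhint : IntegrableOn h (Icc (0:ℝ) 1) := by
      apply Integrable.mono' ((integrable_const 1).add hh2int)
        ((((measurable_fderiv ℝ g).comp hccont.measurable).norm).aestronglyMeasurable)
      apply ae_of_all; intro s
      rw [Real.norm_of_nonneg (norm_nonneg _)]
      show h s ≤ 1 + h s ^ 2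
      nlinarith [sq_nonneg (h s - 1)]
    set gam : ℝ → E3 := fun s => (fderiv ℝ g (cc s)) (x - y) with hgamdef
    have hderiv : ∀ s ∈ uIcc (0:ℝ) 1, HasDerivAt (fun t => g (cc t)) (gam s) s := by
      intro s hs
      rw [uIcc_of_le (by norm_num : (0:ℝ) ≤ 1)] at hs
      have hcd : HasDerivAt cc (x - y) s := by
        simpa [hcdef] using ((hasDerivAt_id s).smul_const (x - y)).const_add y
      have hg' := (hd _ (hc1 s hs)).hasFDerivAt
      exact hg'.comp_hasDerivAt s hcd
    have hgammeas : Measurable gam :=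
      (measurable_fderiv_apply_const ℝ g (x - y)).comp hccont.measurable
    have hIoc_int_h : IntegrableOn h (Ioc (0:ℝ) 1) := hhint.mono_set Ioc_subset_Icc_self
    have hIoc_int_h2 : IntegrableOn (fun s => h s ^ 2) (Ioc (0:ℝ) 1) :=
      hh2int.mono_set Ioc_subset_Icc_self
    have hgamint : IntervalIntegrable gam volume 0 1 := by
      rw [intervalIntegrable_iff, uIoc_of_le (by norm_num : (0:ℝ) ≤ 1)]
      apply Integrable.mono' (hIoc_int_h.const_mul ‖x - y‖) hgammeas.aestronglyMeasurable
      apply ae_of_all; intro s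
      calc ‖gam s‖ ≤ ‖fderiv ℝ g (cc s)‖ * ‖x - y‖ := ContinuousLinearMap.le_opNorm _ _
        _ = ‖x - y‖ * h s := mul_comm _ _
    have hFTC : ∫ s in (0:ℝ)..1, gam s = g x - g y := by
      have hft := intervalIntegral.integral_eq_sub_of_hasDerivAt hderiv hgamint
      have hc1e : cc 1 = x := by simp [hcdef]
      have hc0e : cc 0 = y := by simp [hcdef]
      rw [hft, hc1e, hc0e]
    have hxy2r : ‖x - y‖ ≤ 2 * r := by
      have hx' : ‖x‖ < r := mem_ball_zero_iff.mp hx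
      have hy' : ‖y‖ < r := mem_ball_zero_iff.mp hy
      calc ‖x - y‖ ≤ ‖x‖ + ‖y‖ := norm_sub_le _ _
        _ ≤ 2 * r := by linarith
    have step1 : ‖g x - g y‖ ≤ 2 * r * ∫ s in Ioc (0:ℝ) 1, h s := by
      rw [← hFTC]
      calc ‖∫ s in (0:ℝ)..1, gam s‖ ≤ ∫ s in (0:ℝ)..1, ‖gam s‖ :=
          intervalIntegral.norm_integral_le_integral_norm (by norm_num)
        _ ≤ ∫ s in (0:ℝ)..1, 2 * r * h s := by
            apply intervalIntegral.integral_mono_on (by norm_num) hgamint.norm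
              (intervalIntegrable_iff.mpr (by
                rw [uIoc_of_le (by norm_num : (0:ℝ) ≤ 1)]
                exact hIoc_int_h.const_mul (2 * r)))
            intro s hs
            calc ‖gam s‖ ≤ ‖fderiv ℝ g (cc s)‖ * ‖x - y‖ :=
                ContinuousLinearMap.le_opNorm _ _
              _ ≤ h s * (2 * r) := mul_le_mul_of_nonneg_left hxy2r (norm_nonneg _)
              _ = 2 * r * h s := mul_comm _ _
        _ = 2 * r * ∫ s in Ioc (0:ℝ) 1, h s := by
            rw [intervalIntegral.integral_const_mul,
              intervalIntegral.integral_of_le (by norm_num : (0:ℝ) ≤ 1)]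
    have hCS : (∫ s in Ioc (0:ℝ) 1, h s) ^ 2 ≤ ∫ s in Ioc (0:ℝ) 1, h s ^ 2 := by
      have hcs := sq_integral_le (volume.restrict (Ioc (0:ℝ) 1)) hIoc_int_h hIoc_int_h2
      simpa [Measure.restrict_apply_univ, Real.volume_Ioc] using hcs
    have hsq : ‖g x - g y‖ ^ 2 ≤ 4 * r ^ 2 * ∫ s in Ioc (0:ℝ) 1, h s ^ 2 := by
      have h1 : ‖g x - g y‖ ^ 2 ≤ (2 * r * ∫ s in Ioc (0:ℝ) 1, h s) ^ 2 :=
        pow_le_pow_left₀ (norm_nonneg _) step1 2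
      have h2 : (2 * r * ∫ s in Ioc (0:ℝ) 1, h s) ^ 2
          = 4 * r ^ 2 * (∫ s in Ioc (0:ℝ) 1, h s) ^ 2 := by ring
      have h3 : 4 * r ^ 2 * (∫ s in Ioc (0:ℝ) 1, h s) ^ 2
          ≤ 4 * r ^ 2 * ∫ s in Ioc (0:ℝ) 1, h s ^ 2 :=
        mul_le_mul_of_nonneg_left hCS (by positivity)
      linarith
    calc ENNReal.ofReal (‖g x - g y‖ ^ 2)
        ≤ ENNReal.ofReal (4 * r ^ 2 * ∫ s in Ioc (0:ℝ) 1, h s ^ 2) :=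
          ENNReal.ofReal_le_ofReal hsq
      _ = ENNReal.ofReal (4 * r ^ 2) * ENNReal.ofReal (∫ s in Ioc (0:ℝ) 1, h s ^ 2) :=
          ENNReal.ofReal_mul (by positivity)
      _ = ENNReal.ofReal (4 * r ^ 2) * ∫⁻ s in Ioc (0:ℝ) 1, ENNReal.ofReal (h s ^ 2) := by
          rw [ofReal_integral_eq_lintegral_ofReal hIoc_int_h2
            (ae_of_all _ fun s => sq_nonneg _)]
      _ ≤ ENNReal.ofReal (4 * r ^ 2) * ∫⁻ s in Icc (0:ℝ) 1, ENNReal.ofReal (h s ^ 2) :=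
          mul_le_mul_right (lintegral_mono_set Ioc_subset_Icc_self) _
      _ = ENNReal.ofReal (4 * r ^ 2) * Ψ x y := by rw [hΨeq]
  -- Jensen step and assembly
  set avg : E3 := ⨍ y in B, g y with havg
  have hJ1 : ∀ x : E3, Integrable (fun y => ‖g x - g y‖) (volume.restrict B) := by
    intro x
    have h1 := ((integrable_const (g x)).sub hgB).norm
    exact h1.congr (ae_of_all _ fun y => rfl)
  have hJ2 : ∀ x : E3, Integrable (fun y => ‖g x - g y‖ ^ 2) (volume.restrict B) := by
    intro x
    have hb : Integrable (fun y => 2 * ‖g x‖ ^ 2 + 2 * ‖g y‖ ^ 2) (volume.restrict B) := by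
      have := (integrable_const (2 * ‖g x‖ ^ 2)).add (hg2B.const_mul 2)
      exact this.congr (ae_of_all _ fun y => rfl)
    have hasm : AEStronglyMeasurable (fun y => ‖g x - g y‖ ^ 2) (volume.restrict B) := by
      have h1 : AEStronglyMeasurable (fun y => ‖g x - g y‖) (volume.restrict B) :=
        (aestronglyMeasurable_const.sub hgB.aestronglyMeasurable).norm
      have h2 := h1.mul h1
      exact h2.congr (ae_of_all _ fun y => by simp [pow_two])
    apply Integrable.mono' hb hasm
    apply ae_of_all; intro y
    rw [Real.norm_of_nonneg (sq_nonneg _)]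
    have h1 : ‖g x - g y‖ ≤ ‖g x‖ + ‖g y‖ := norm_sub_le _ _
    nlinarith [norm_nonneg (g x - g y), sq_nonneg (‖g x‖ - ‖g y‖)]
  have hjensen : ∀ x : E3, ‖g x - avg‖ ^ 2 ≤ m⁻¹ * ∫ y in B, ‖g x - g y‖ ^ 2 := by
    intro x
    have hsub : (∫ y in B, (g x - g y)) = m • g x - ∫ y in B, g y := by
      rw [integral_sub (integrable_const _) hgB, setIntegral_const]; rfl
    have havg' : g x - avg = m⁻¹ • ∫ y in B, (g x - g y) := by
      rw [hsub, smul_sub, smul_smul, inv_mul_cancel₀ (ne_of_gt hm0), one_smul, havg,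
        setAverage_eq]; rfl
    have hnorm : ‖g x - avg‖ ≤ m⁻¹ * ∫ y in B, ‖g x - g y‖ := by
      rw [havg', norm_smul, Real.norm_of_nonneg (inv_nonneg.mpr hm0.le)]
      exact mul_le_mul_of_nonneg_left (norm_integral_le_integral_norm _)
        (inv_nonneg.mpr hm0.le)
    have hcs := sq_integral_le (volume.restrict B) (hJ1 x) (hJ2 x)
    rw [Measure.restrict_apply_univ, ← hm] at hcs
    have h1 : ‖g x - avg‖ ^ 2 ≤ (m⁻¹ * ∫ y in B, ‖g x - g y‖) ^ 2 :=
      pow_le_pow_left₀ (norm_nonneg _) hnorm 2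
    have h2 : (m⁻¹ * ∫ y in B, ‖g x - g y‖) ^ 2
        = m⁻¹ * m⁻¹ * (∫ y in B, ‖g x - g y‖) ^ 2 := by ring
    have h3 : m⁻¹ * m⁻¹ * (∫ y in B, ‖g x - g y‖) ^ 2
        ≤ m⁻¹ * m⁻¹ * (m * ∫ y in B, ‖g x - g y‖ ^ 2) :=
      mul_le_mul_of_nonneg_left hcs (by positivity)
    have h4 : m⁻¹ * m⁻¹ * (m * ∫ y in B, ‖g x - g y‖ ^ 2)
        = m⁻¹ * ∫ y in B, ‖g x - g y‖ ^ 2 := by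
      field_simp
    linarith
  have hintp : AEStronglyMeasurable (fun x => ‖g x - avg‖ ^ 2) (volume.restrict B) := by
    have h1 : AEStronglyMeasurable (fun x => ‖g x - avg‖) (volume.restrict B) :=
      (hgB.aestronglyMeasurable.sub aestronglyMeasurable_const).norm
    have h2 := h1.mul h1
    exact h2.congr (ae_of_all _ fun y => by simp [pow_two])
  have hlhs : (∫ x in B, ‖g x - avg‖ ^ 2)
      = (∫⁻ x in B, ENNReal.ofReal (‖g x - avg‖ ^ 2)).toReal := by
    rw [integral_eq_lintegral_of_nonneg_ae (ae_of_all _ fun x => sq_nonneg _) hintp]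
  have hdouble : (∫⁻ x in B, ∫⁻ y in B, ENNReal.ofReal (‖g x - g y‖ ^ 2))
      ≤ ENNReal.ofReal (4 * r ^ 2) * Cb := by
    have hmeasI : Measurable fun x => ∫⁻ y in B, Ψ x y :=
      Measurable.lintegral_prod_right (f := Ψ) hmeasΨ
    have hTfin : (∫⁻ x in B, ∫⁻ y in B, Ψ x y) ≠ ∞ := ne_top_of_le_ne_top hCb_ne hT
    calc (∫⁻ x in B, ∫⁻ y in B, ENNReal.ofReal (‖g x - g y‖ ^ 2))
        ≤ ∫⁻ x in B, ENNReal.ofReal (4 * r ^ 2) * ∫⁻ y in B, Ψ x y := by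
          apply lintegral_mono_ae
          filter_upwards [ae_restrict_mem hBmeas, ae_lt_top hmeasI hTfin] with x hxB hxfin
          calc (∫⁻ y in B, ENNReal.ofReal (‖g x - g y‖ ^ 2))
              ≤ ∫⁻ y in B, ENNReal.ofReal (4 * r ^ 2) * Ψ x y := by
                apply lintegral_mono_ae
                filter_upwards [ae_restrict_mem hBmeas, ae_lt_top (hmeasΨ1 x) hxfin.ne]
                  with y hyB hyfin
                exact hpointwise x hxB y hyB hyfin.ne
            _ = ENNReal.ofReal (4 * r ^ 2) * ∫⁻ y in B, Ψ x y :=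
                lintegral_const_mul' _ _ ENNReal.ofReal_ne_top
      _ = ENNReal.ofReal (4 * r ^ 2) * ∫⁻ x in B, ∫⁻ y in B, Ψ x y :=
          lintegral_const_mul' _ _ ENNReal.ofReal_ne_top
      _ ≤ ENNReal.ofReal (4 * r ^ 2) * Cb := mul_le_mul_right hT _
  have hchain : (∫⁻ x in B, ENNReal.ofReal (‖g x - avg‖ ^ 2))
      ≤ ENNReal.ofReal (32 * r ^ 2 * K2) := by
    have hvolB_eq : volume B = ENNReal.ofReal m :=
      (ENNReal.ofReal_toReal (ne_of_lt hvolB_lt)).symm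
    calc (∫⁻ x in B, ENNReal.ofReal (‖g x - avg‖ ^ 2))
        ≤ ∫⁻ x in B, ENNReal.ofReal (m⁻¹ * ∫ y in B, ‖g x - g y‖ ^ 2) :=
          lintegral_mono fun x => ENNReal.ofReal_le_ofReal (hjensen x)
      _ = ∫⁻ x in B, ENNReal.ofReal m⁻¹ * ∫⁻ y in B, ENNReal.ofReal (‖g x - g y‖ ^ 2) := by
          apply lintegral_congr; intro x
          rw [ENNReal.ofReal_mul (inv_nonneg.mpr hm0.le),
            ofReal_integral_eq_lintegral_ofReal (hJ2 x) (ae_of_all _ fun y => sq_nonneg _)]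
      _ = ENNReal.ofReal m⁻¹ * ∫⁻ x in B, ∫⁻ y in B, ENNReal.ofReal (‖g x - g y‖ ^ 2) :=
          lintegral_const_mul' _ _ ENNReal.ofReal_ne_top
      _ ≤ ENNReal.ofReal m⁻¹ * (ENNReal.ofReal (4 * r ^ 2) * Cb) :=
          mul_le_mul_right hdouble _
      _ = ENNReal.ofReal (32 * r ^ 2 * K2) := by
          rw [hCb, hKeq, hvolB_eq]
          rw [← ENNReal.ofReal_mul (by norm_num : (0:ℝ) ≤ 8),
            ← ENNReal.ofReal_mul hm0.le,
            ← ENNReal.ofReal_mul (by positivity : (0:ℝ) ≤ 4 * r ^ 2),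
            ← ENNReal.ofReal_mul (inv_nonneg.mpr hm0.le)]
          congr 1
          field_simp
          ring
  rw [hlhs]
  refine le_trans (ENNReal.toReal_mono ENNReal.ofReal_ne_top hchain) ?_
  rw [ENNReal.toReal_ofReal (by positivity)]



/-- Lemma 2.3: if `sup_{0<r<1} E(f;r) ≤ M` then `H̃(f;r) ≤ c r H̃(f;1/2) + c₂ M` for all
`0 < r < r₁`, with absolute constants `c, r₁, c₂` (so `ĉ(M) = c₂ M → 0` as `M → 0`). -/
theorem stmt_11 :
    ∃ c : ℝ, 0 < c ∧ ∃ r₁ ∈ Ioc (0:ℝ) (1/2), ∃ c₂ : ℝ, 0 < c₂ ∧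
      ∀ (f : ℝ → E3 → E3) (M : ℝ), 0 < M →
      (∀ t ∈ Ioo (-1:ℝ) (0:ℝ), ∀ x ∈ ball (0:E3) 1, DifferentiableAt ℝ (f t) x) →
      (∀ t ∈ Ioo (-1:ℝ) (0:ℝ), IntegrableOn (f t) (ball (0:E3) 1)) →
      (∀ t ∈ Ioo (-1:ℝ) (0:ℝ), IntegrableOn (fun x => ‖f t x‖^2) (ball (0:E3) 1)) →
      (∀ t ∈ Ioo (-1:ℝ) (0:ℝ),
        IntegrableOn (fun x => ‖fderiv ℝ (f t) x‖^2) (ball (0:E3) 1)) →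
      (∀ t ∈ Ioo (-1:ℝ) (0:ℝ),
        IntegrableOn (fun x => ∑ i : Fin 3, (curl3 (f t) x i)^2) (ball (0:E3) 1)) →
      (∀ s ∈ Ioc (0:ℝ) (1/2), IntegrableOn
        (fun t => ∫ x in ball (0:E3) s, ‖f t x - ⨍ y in ball (0:E3) s, f t y‖^2)
        (Ioo (-(s^2)) (0:ℝ))) →
      (∀ s ∈ Ioo (0:ℝ) 1, IntegrableOn
        (fun t => ∫ x in ball (0:E3) s, ‖fderiv ℝ (f t) x‖^2) (Ioo (-(s^2)) (0:ℝ))) →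
      (∀ r ∈ Ioo (0:ℝ) 1, Escaled f r ≤ M) →
      ∀ r ∈ Ioo (0:ℝ) r₁, Htilde f r ≤ c * r * Htilde f (1/2) + c₂ * M := by
  refine ⟨1, one_pos, 1/2, ⟨by norm_num, le_refl _⟩, 32, by norm_num, ?_⟩
  intro f M hM h2 h3 h4 h5 _h6 h7 h8 h9 r hr
  obtain ⟨hr0, hrh⟩ := hr
  have hr1 : r < 1 := by linarith
  have hsubT : Ioo (-(r^2)) (0:ℝ) ⊆ Ioo (-1:ℝ) (0:ℝ) := by
    intro t ht
    refine ⟨?_, ht.2⟩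
    have : r^2 < 1 := by nlinarith
    have := ht.1
    linarith
  have hptw : ∀ t ∈ Ioo (-(r^2)) (0:ℝ),
      (∫ x in ball (0:E3) r, ‖f t x - ⨍ y in ball (0:E3) r, f t y‖^2)
        ≤ 32 * r^2 * ∫ x in ball (0:E3) r, ‖fderiv ℝ (f t) x‖^2 := by
    intro t ht
    have ht' := hsubT ht
    exact poincare_ball hr0 hr1.le (f t) (h2 t ht') (h3 t ht') (h4 t ht') (h5 t ht')
  have hAint : IntegrableOn
      (fun t => ∫ x in ball (0:E3) r, ‖f t x - ⨍ y in ball (0:E3) r, f t y‖^2)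
      (Ioo (-(r^2)) (0:ℝ)) := h7 r ⟨hr0, hrh.le⟩
  have hDint : IntegrableOn
      (fun t => ∫ x in ball (0:E3) r, ‖fderiv ℝ (f t) x‖^2)
      (Ioo (-(r^2)) (0:ℝ)) := h8 r ⟨hr0, hr1⟩
  have hmono : (∫ t in Ioo (-(r^2)) (0:ℝ),
        ∫ x in ball (0:E3) r, ‖f t x - ⨍ y in ball (0:E3) r, f t y‖^2)
      ≤ ∫ t in Ioo (-(r^2)) (0:ℝ),
        32 * r^2 * ∫ x in ball (0:E3) r, ‖fderiv ℝ (f t) x‖^2 :=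
    setIntegral_mono_on hAint (hDint.const_mul _) measurableSet_Ioo hptw
  have hconst : (∫ t in Ioo (-(r^2)) (0:ℝ),
        32 * r^2 * ∫ x in ball (0:E3) r, ‖fderiv ℝ (f t) x‖^2)
      = 32 * r^2 * ∫ t in Ioo (-(r^2)) (0:ℝ),
        ∫ x in ball (0:E3) r, ‖fderiv ℝ (f t) x‖^2 :=
    integral_const_mul _ _
  have hE : Escaled f r ≤ M := h9 r ⟨hr0, hr1⟩
  have hrne : r ≠ 0 := ne_of_gt hr0
  have hHr : Htilde f r ≤ 32 * M := by
    rw [Htilde]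
    calc (1/r^3) * ∫ t in Ioo (-(r^2)) (0:ℝ),
          ∫ x in ball (0:E3) r, ‖f t x - ⨍ y in ball (0:E3) r, f t y‖^2
        ≤ (1/r^3) * (32 * r^2 * ∫ t in Ioo (-(r^2)) (0:ℝ),
            ∫ x in ball (0:E3) r, ‖fderiv ℝ (f t) x‖^2) := by
          apply mul_le_mul_of_nonneg_left _ (by positivity)
          rw [← hconst]; exact hmono
      _ = 32 * ((1/r) * ∫ t in Ioo (-(r^2)) (0:ℝ),
            ∫ x in ball (0:E3) r, ‖fderiv ℝ (f t) x‖^2) := by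
          field_simp
      _ = 32 * Escaled f r := by rw [Escaled]
      _ ≤ 32 * M := by linarith
  have hH12 : 0 ≤ Htilde f (1/2) := by
    rw [Htilde]
    apply mul_nonneg (by norm_num)
    apply integral_nonneg
    intro t
    exact integral_nonneg fun x => sq_nonneg _
  have : 0 ≤ 1 * r * Htilde f (1/2) := by
    rw [one_mul]
    exact mul_nonneg hr0.le hH12
  linarith
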